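/- Let W = [[0,-2],[2,0]] and let D1 = diag(1,0), D2 = diag(0,1). There exists no symmetric positive definite 2×2 matrix M such that both (M W D1)_sym - M and (M W D2)_sym - M are negative definite, where A_sym := (A + Aᵀ)/2. -/

import Mathlib

open Matrix

/-- `X ≺ 0`: negative definiteness of a real matrix (`xᵀXx < 0` for all nonzero `x`). -/
def NegDef {n : ℕ} (X : Matrix (Fin n) (Fin n) ℝ) : Prop :=
  ∀ x : Fin n → ℝ, x ≠ 0 → x ⬝ᵥ X.mulVec x < 0

/-- The symmetric part `(A + Aᵀ)/2` of a matrix. -/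
noncomputable def symPart {n : ℕ} (A : Matrix (Fin n) (Fin n) ℝ) : Matrix (Fin n) (Fin n) ℝ :=
  (1/2 : ℝ) • (A + Aᵀ)

/-- For `W = [[0,-2],[2,0]]`, `D1 = diag(1,0)`, `D2 = diag(0,1)`, there is no symmetric
positive definite `M` with both `(M W D1)_sym - M` and `(M W D2)_sym - M` negative
definite. -/
theorem stmt5 (W D1 D2 : Matrix (Fin 2) (Fin 2) ℝ)
    (hW : W = !![0, -2; 2, 0]) (hD1 : D1 = !![1, 0; 0, 0]) (hD2 : D2 = !![0, 0; 0, 1]) :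
    ¬ ∃ M : Matrix (Fin 2) (Fin 2) ℝ, M.PosDef ∧
        NegDef (symPart (M * W * D1) - M) ∧ NegDef (symPart (M * W * D2) - M) := by
  subst hW hD1 hD2
  rintro ⟨M, hM, h1, h2⟩
  set a := M 0 0 with ha'
  set b := M 0 1 with hb'
  set c := M 1 1 with hc'
  have hb : M 1 0 = b := by
    have := hM.isHermitian.apply 0 1
    simpa using this
  have ha : 0 < a := by
    have := hM.dotProduct_mulVec_pos (x := ![1, 0]) (by
      intro h
      have := congrFun h 0
      simp at this)
    simpa [dotProduct, mulVec, Fin.sum_univ_two] using this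
  -- quadratic form helper
  have form1 : ∀ u v : ℝ, (![u, v] : Fin 2 → ℝ) ≠ 0 →
      (2*b - a) * u^2 + 2*(c - b) * u * v - c * v^2 < 0 := by
    intro u v hne
    have := h1 ![u, v] hne
    simp only [symPart, Matrix.sub_apply, Matrix.smul_apply, Matrix.add_apply,
      Matrix.transpose_apply, dotProduct, mulVec, Fin.sum_univ_two] at this
    simp only [Matrix.mul_apply, Fin.sum_univ_two] at this
    simp [hb] at this
    nlinarith [this]
  have form2 : ∀ u v : ℝ, (![u, v] : Fin 2 → ℝ) ≠ 0 →
      (-a) * u^2 - 2*(a + b) * u * v - (2*b + c) * v^2 < 0 := by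
    intro u v hne
    have := h2 ![u, v] hne
    simp only [symPart, Matrix.sub_apply, Matrix.smul_apply, Matrix.add_apply,
      Matrix.transpose_apply, dotProduct, mulVec, Fin.sum_univ_two] at this
    simp only [Matrix.mul_apply, Fin.sum_univ_two] at this
    simp [hb] at this
    nlinarith [this]
  have h11 : 2*b - a < 0 := by
    have := form1 1 0 (by
      intro h; have := congrFun h 0; simp at this)
    nlinarith [this]
  have hd1 : -(c - b)^2 - c * (2*b - a) > 0 := by
    have hne : (![-(c - b), 2*b - a] : Fin 2 → ℝ) ≠ 0 := by
      intro h
      have := congrFun h 1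
      simp at this
      linarith
    have := form1 (-(c - b)) (2*b - a) hne
    -- form value = (2b-a) * det
    nlinarith [this, h11]
  have hd2 : a * (2*b + c) - (a + b)^2 > 0 := by
    have hne : (![a + b, -a] : Fin 2 → ℝ) ≠ 0 := by
      intro h
      have := congrFun h 1
      simp at this
      linarith
    have := form2 (a + b) (-a) hne
    nlinarith [this, ha]
  nlinarith [hd1, hd2, sq_nonneg (a - c), sq_nonneg b]
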